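/- arXiv:1604.04343 — 7 statements merged into one kernel-verified Lean document; each statement's English description precedes it below -/
import Mathlib

section
/- Let P be the stochastic matrix of an irreducible and aperiodic finite Markov chain and r a row vector. Then the matrix I − P + e·r is invertible if and only if r·e ≠ 0. -/
open Matrix

def IsStochastic {S : ℕ} (P : Matrix (Fin S) (Fin S) ℝ) : Prop :=
  (∀ i j, 0 ≤ P i j) ∧ ∀ i, ∑ j, P i j = 1

def IsPrimitive {S : ℕ} (P : Matrix (Fin S) (Fin S) ℝ) : Prop :=
  ∃ k : ℕ, ∀ i j, 0 < (P ^ k) i j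

lemma stoch_pow {S : ℕ} {P : Matrix (Fin S) (Fin S) ℝ} (h : IsStochastic P) (n : ℕ) :
    IsStochastic (P ^ n) := by
  induction n with
  | zero =>
    constructor
    · intro i j
      simp only [pow_zero, Matrix.one_apply]
      split <;> norm_num
    · intro i
      simp [pow_zero, Matrix.one_apply]
  | succ n ih =>
    rw [pow_succ]
    constructor
    · intro i j
      rw [Matrix.mul_apply]
      exact Finset.sum_nonneg fun l _ => mul_nonneg (ih.1 i l) (h.1 l j)
    · intro i
      simp only [Matrix.mul_apply]
      rw [Finset.sum_comm]
      calc ∑ l, ∑ j, (P ^ n) i l * P l j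
          = ∑ l, (P ^ n) i l * ∑ j, P l j := by
            simp [Finset.mul_sum]
        _ = 1 := by simp [h.2, ih.2 i]

/-- For a primitive stochastic matrix `P` and a row vector `r`, the matrix
`I − P + e·r` is invertible if and only if `r·e ≠ 0`. -/
theorem generalized_fundamental_invertible_iff
    {S : ℕ} (hS : 0 < S) (P : Matrix (Fin S) (Fin S) ℝ)
    (hst : IsStochastic P) (hprim : _root_.IsPrimitive P)
    (r : Fin S → ℝ) (e : Fin S → ℝ) (he : e = fun _ => 1) :
    IsUnit (1 - P + vecMulVec e r) ↔ r ⬝ᵥ e ≠ 0 := by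
  subst he
  set e : Fin S → ℝ := fun _ => 1 with hedef
  set A : Matrix (Fin S) (Fin S) ℝ := 1 - P + vecMulVec e r with hA
  have hPe : P *ᵥ e = e := by
    funext i
    simp [Matrix.mulVec, dotProduct, hedef, hst.2 i]
  have hAv : ∀ v : Fin S → ℝ, A *ᵥ v = v - P *ᵥ v + (r ⬝ᵥ v) • e := by
    intro v
    rw [hA, Matrix.add_mulVec, Matrix.sub_mulVec, Matrix.one_mulVec]
    congr 1
    funext i
    simp [Matrix.mulVec, dotProduct, Matrix.vecMulVec_apply, hedef,
      Finset.mul_sum, mul_comm, mul_assoc]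
  rw [Matrix.isUnit_iff_isUnit_det, isUnit_iff_ne_zero]
  constructor
  · -- det ≠ 0 → r ⬝ᵥ e ≠ 0
    intro hdet hre
    apply hdet
    rw [← Matrix.exists_mulVec_eq_zero_iff]
    refine ⟨e, ?_, ?_⟩
    · intro h0
      have := congrFun h0 ⟨0, hS⟩
      simp [hedef] at this
    · rw [hAv e, hPe, hre]
      simp
  · -- r ⬝ᵥ e ≠ 0 → det ≠ 0
    intro hre hdet
    rw [← Matrix.exists_mulVec_eq_zero_iff] at hdet
    obtain ⟨x, hx0, hx⟩ := hdet
    rw [hAv x] at hx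
    set c : ℝ := r ⬝ᵥ x with hc
    have hPx : P *ᵥ x = x + c • e := by
      have := hx
      funext i
      have h := congrFun hx i
      simp only [Pi.add_apply, Pi.sub_apply, Pi.smul_apply, Pi.zero_apply, smul_eq_mul,
        hedef, mul_one] at h ⊢
      linarith
    -- P^n *ᵥ x = x + (n*c) • e
    have hiter : ∀ n : ℕ, (P ^ n) *ᵥ x = x + ((n : ℝ) * c) • e := by
      intro n
      induction n with
      | zero => simp
      | succ n ih =>
        rw [pow_succ', ← Matrix.mulVec_mulVec, ih]
        rw [Matrix.mulVec_add, hPx, Matrix.mulVec_smul, hPe]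
        push_cast
        funext i
        simp [hedef]
        ring
    -- boundedness of entries of P^n *ᵥ x
    have hne : (Finset.univ : Finset (Fin S)).Nonempty := ⟨⟨0, hS⟩, Finset.mem_univ _⟩
    set M : ℝ := Finset.univ.sup' hne (fun j => |x j|) with hM
    have hbound : ∀ (n : ℕ) (i : Fin S), |((P ^ n) *ᵥ x) i| ≤ M := by
      intro n i
      have hstn := stoch_pow hst n
      calc |((P ^ n) *ᵥ x) i| = |∑ j, (P ^ n) i j * x j| := by
            simp [Matrix.mulVec, dotProduct]
        _ ≤ ∑ j, |(P ^ n) i j * x j| := Finset.abs_sum_le_sum_abs _ _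
        _ ≤ ∑ j, (P ^ n) i j * M := by
            apply Finset.sum_le_sum
            intro j _
            rw [abs_mul, abs_of_nonneg (hstn.1 i j)]
            exact mul_le_mul_of_nonneg_left
              (Finset.le_sup' (fun j => |x j|) (Finset.mem_univ j)) (hstn.1 i j)
        _ = M := by rw [← Finset.sum_mul, hstn.2 i, one_mul]
    -- deduce c = 0
    have hc0 : c = 0 := by
      by_contra hcne
      obtain ⟨i⟩ : Nonempty (Fin S) := ⟨⟨0, hS⟩⟩
      obtain ⟨n, hn⟩ := exists_nat_gt ((M + |x i|) / |c|)
      have hcpos : 0 < |c| := abs_pos.mpr hcne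
      have h1 : M + |x i| < n * |c| := by
        rwa [div_lt_iff₀ hcpos] at hn
      have h2 : |x i + (n : ℝ) * c| ≤ M := by
        have := hbound n i
        rw [hiter n] at this
        simpa [hedef] using this
      rw [add_comm (x i)] at h2
      have h3 : (n : ℝ) * |c| - |x i| ≤ |(n : ℝ) * c + x i| := by
        have := abs_sub_abs_le_abs_sub ((n : ℝ) * c) (-(x i))
        simp only [abs_neg, abs_mul, Nat.abs_cast, sub_neg_eq_add] at this
        linarith [this, abs_add_le (x i) ((n : ℝ) * c)]
      linarith
    -- so Px = x, then x constant via primitivity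
    have hPxx : P *ᵥ x = x := by rw [hPx, hc0]; simp
    obtain ⟨k, hk⟩ := hprim
    have hPkx : (P ^ k) *ᵥ x = x := by
      have := hiter k
      rw [hc0] at this
      simpa using this
    -- max principle
    obtain ⟨i0, _, hi0⟩ := Finset.exists_max_image Finset.univ x hne
    have hconst : ∀ j, x j = x i0 := by
      have hsum : ∑ j, (P ^ k) i0 j * (x i0 - x j) = 0 := by
        have h1 : ∑ j, (P ^ k) i0 j * x j = x i0 := by
          have := congrFun hPkx i0
          simpa [Matrix.mulVec, dotProduct] using this
        have h2 : ∑ j, (P ^ k) i0 j * x i0 = x i0 := by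
          rw [← Finset.sum_mul, (stoch_pow hst k).2 i0, one_mul]
        simp only [mul_sub]
        rw [Finset.sum_sub_distrib, h1, h2, sub_self]
      have hzero := (Finset.sum_eq_zero_iff_of_nonneg ?_).mp hsum
      · intro j
        have := hzero j (Finset.mem_univ j)
        have hpos := hk i0 j
        have : x i0 - x j = 0 := by
          rcases mul_eq_zero.mp this with h | h
          · exact absurd h (ne_of_gt hpos)
          · exact h
        linarith
      · intro j _
        exact mul_nonneg (le_of_lt (hk i0 j)) (by linarith [hi0 j (Finset.mem_univ j)])
    -- x constant, r ⬝ x = 0 forces x i0 = 0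
    have hrx : r ⬝ᵥ x = 0 := hc0
    have : x i0 * (r ⬝ᵥ e) = 0 := by
      rw [← hrx]
      simp only [dotProduct, hedef, mul_one]
      rw [Finset.mul_sum]
      apply Finset.sum_congr rfl
      intro j _
      rw [hconst j]
      ring
    have hxi0 : x i0 = 0 := by
      rcases mul_eq_zero.mp this with h | h
      · exact h
      · exact absurd h hre
    apply hx0
    funext j
    rw [hconst j, hxi0]
    rfl
end

section
/- Let P be an irreducible aperiodic finite stochastic matrix with stationary distribution π, and let r be a row vector with r·e ≠ 0. Then π = r (I − P + e·r)^{-1}. -/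
open Matrix

lemma pow_isStochastic {S : ℕ} {P : Matrix (Fin S) (Fin S) ℝ}
    (h : IsStochastic P) (k : ℕ) : IsStochastic (P ^ k) := by
  induction k with
  | zero =>
    constructor
    · intro i j
      simp [Matrix.one_apply]
      positivity
    · intro i; simp [Matrix.one_apply]
  | succ n ih =>
    rw [pow_succ]
    constructor
    · intro i j
      rw [Matrix.mul_apply]
      exact Finset.sum_nonneg fun l _ => mul_nonneg (ih.1 i l) (h.1 l j)
    · intro i
      simp only [Matrix.mul_apply]
      rw [Finset.sum_comm]
      calc ∑ l, ∑ j, (P ^ n) i l * P l j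
          = ∑ l, (P ^ n) i l * ∑ j, P l j := by
            simp [Finset.mul_sum]
        _ = 1 := by simp [h.2, ih.2 i]

/-- A positive stochastic matrix has only constant fixed vectors. -/
lemma fixed_vector_const {S : ℕ} (hS : 0 < S) {Q : Matrix (Fin S) (Fin S) ℝ}
    (hQ : IsStochastic Q) (hpos : ∀ i j, 0 < Q i j)
    {v : Fin S → ℝ} (hv : Q *ᵥ v = v) : ∀ i j, v i = v j := by
  haveI : Nonempty (Fin S) := ⟨⟨0, hS⟩⟩
  obtain ⟨i₀, _, hmax⟩ := Finset.exists_max_image Finset.univ v ⟨Classical.arbitrary _, Finset.mem_univ _⟩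
  set M := v i₀ with hM
  have key : ∀ j, v j = M := by
    have hsum : ∑ j, Q i₀ j * (M - v j) = 0 := by
      have h1 : ∑ j, Q i₀ j * v j = v i₀ := congrFun hv i₀
      have h2 : ∑ j, Q i₀ j * M = M := by
        rw [← Finset.sum_mul, hQ.2 i₀, one_mul]
      calc ∑ j, Q i₀ j * (M - v j) = (∑ j, Q i₀ j * M) - ∑ j, Q i₀ j * v j := by
            rw [← Finset.sum_sub_distrib]; congr 1; ext j; ring
        _ = 0 := by rw [h1, h2, ← hM]; ring
    have hterm : ∀ j ∈ Finset.univ, 0 ≤ Q i₀ j * (M - v j) := fun j _ =>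
      mul_nonneg (le_of_lt (hpos i₀ j)) (sub_nonneg.mpr (hmax j (Finset.mem_univ j)))
    intro j
    have := (Finset.sum_eq_zero_iff_of_nonneg hterm).mp hsum j (Finset.mem_univ j)
    have hne : Q i₀ j ≠ 0 := ne_of_gt (hpos i₀ j)
    have : M - v j = 0 := by
      rcases mul_eq_zero.mp this with h | h
      · exact absurd h hne
      · exact h
    linarith
  intro i j; rw [key i, key j]

/-- For a primitive stochastic matrix `P` with stationary distribution `π`
and a row vector `r` with `r·e ≠ 0`, we have `π = r (I − P + e·r)⁻¹`. -/
theorem stationary_distribution_via_generalized_fundamental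
    {S : ℕ} (hS : 0 < S) (P : Matrix (Fin S) (Fin S) ℝ)
    (hst : IsStochastic P) (hprim : _root_.IsPrimitive P)
    (π : Fin S → ℝ) (e : Fin S → ℝ) (he : e = fun _ => 1)
    (hπP : π ᵥ* P = π) (hπe : π ⬝ᵥ e = 1)
    (r : Fin S → ℝ) (hre : r ⬝ᵥ e ≠ 0) :
    π = r ᵥ* (1 - P + vecMulVec e r)⁻¹ := by
  set A : Matrix (Fin S) (Fin S) ℝ := 1 - P + vecMulVec e r with hA
  -- π ᵥ* A = r
  have hπA : π ᵥ* A = r := by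
    have h1 : π ᵥ* vecMulVec e r = r := by
      funext j
      simp only [vecMul, vecMulVec, dotProduct, Matrix.of_apply]
      have : ∑ i, π i * (e i * r j) = (∑ i, π i * e i) * r j := by
        rw [Finset.sum_mul]; congr 1; ext i; ring
      rw [this]
      rw [show (∑ i, π i * e i) = π ⬝ᵥ e from rfl, hπe, one_mul]
    rw [hA, vecMul_add, vecMul_sub, vecMul_one, hπP, h1]
    simp
  -- A is invertible: kernel of mulVec is trivial
  have hker : ∀ v : Fin S → ℝ, A *ᵥ v = 0 → v = 0 := by
    intro v hv
    -- r ⬝ᵥ v = 0 , from π ⬝ᵥ (A *ᵥ v) = 0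
    have hrv : r ⬝ᵥ v = 0 := by
      have := congrArg (fun w => π ⬝ᵥ w) hv
      simp only [dotProduct_zero] at this
      rw [dotProduct_mulVec, hπA] at this
      exact this
    -- then P *ᵥ v = v
    have hPv : P *ᵥ v = v := by
      have hAv : v - P *ᵥ v + (r ⬝ᵥ v) • e = 0 := by
        have hvmv : vecMulVec e r *ᵥ v = (r ⬝ᵥ v) • e := by
          funext i
          simp only [mulVec, vecMulVec_apply, dotProduct, Pi.smul_apply, smul_eq_mul]
          rw [Finset.sum_mul]
          congr 1; ext j; ring
        have : A *ᵥ v = v - P *ᵥ v + (r ⬝ᵥ v) • e := by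
          rw [hA, add_mulVec, sub_mulVec, one_mulVec, hvmv]
        rw [← this, hv]
      rw [hrv, zero_smul, add_zero, sub_eq_zero] at hAv
      exact hAv.symm
    obtain ⟨k, hk⟩ := hprim
    have hQv : (P ^ k) *ᵥ v = v := by
      clear hk
      induction k with
      | zero => simp
      | succ n ih => rw [pow_succ, ← mulVec_mulVec, hPv, ih]
    have hconst := fixed_vector_const hS (pow_isStochastic hst k) hk hQv
    -- v is constant; r ⬝ᵥ v = 0 forces v = 0
    haveI : Nonempty (Fin S) := ⟨⟨0, hS⟩⟩
    have hvc : ∀ i, v i = v (Classical.arbitrary _) := fun i => hconst i _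
    set c := v (Classical.arbitrary (Fin S)) with hc
    have : r ⬝ᵥ v = c * (r ⬝ᵥ e) := by
      simp only [dotProduct, he]
      rw [Finset.mul_sum]
      congr 1; ext i; rw [hvc i]; ring
    rw [this] at hrv
    have hc0 : c = 0 := by
      rcases mul_eq_zero.mp hrv with h | h
      · exact h
      · exact absurd h hre
    funext i; simp [hvc i, hc0]
  have hinj : Function.Injective A.mulVec := by
    intro x y hxy
    have : A *ᵥ (x - y) = 0 := by
      rw [mulVec_sub, hxy, sub_self]
    have := hker _ this
    exact sub_eq_zero.mp this
  have hunit : IsUnit A := mulVec_injective_iff_isUnit.mp hinj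
  have hAinv : A * A⁻¹ = 1 := mul_nonsing_inv A ((isUnit_iff_isUnit_det A).mp hunit)
  calc π = π ᵥ* 1 := by rw [vecMul_one]
    _ = π ᵥ* (A * A⁻¹) := by rw [hAinv]
    _ = (π ᵥ* A) ᵥ* A⁻¹ := by rw [vecMul_vecMul]
    _ = r ᵥ* A⁻¹ := by rw [hπA]
end

section
/- Let P be an irreducible aperiodic finite stochastic matrix with stationary distribution π and reward vector f, and let r be a row vector with r·e ≠ 0. Then the vector g = (I − P + e·r)^{-1} f satisfies the Poisson equation g = f − η e + P g, where η = π f, and additionally r·g = η. -/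
open Matrix

lemma pow_row_sum {S : ℕ} (P : Matrix (Fin S) (Fin S) ℝ)
    (hst : ∀ i, ∑ j, P i j = 1) (k : ℕ) (i : Fin S) : ∑ j, (P ^ k) i j = 1 := by
  induction k with
  | zero => simp [Matrix.one_apply, Finset.sum_ite_eq]
  | succ n ih =>
    rw [pow_succ]
    simp only [Matrix.mul_apply]
    rw [Finset.sum_comm]
    calc ∑ l, ∑ j, (P ^ n) i l * P l j = ∑ l, (P ^ n) i l * ∑ j, P l j := by
          simp [Finset.mul_sum]
      _ = 1 := by simp [hst, ih]

/-- A harmonic vector for a primitive stochastic matrix is constant. -/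
lemma harmonic_const {S : ℕ} (hS : 0 < S) (P : Matrix (Fin S) (Fin S) ℝ)
    (hst : IsStochastic P) (hprim : _root_.IsPrimitive P)
    (x : Fin S → ℝ) (hx : P *ᵥ x = x) : ∃ c : ℝ, x = fun _ => c := by
  obtain ⟨k, hk⟩ := hprim
  have hpowall : ∀ n : ℕ, (P ^ n) *ᵥ x = x := by
    intro n
    induction n with
    | zero => simp
    | succ m ih => rw [pow_succ', ← Matrix.mulVec_mulVec, ih, hx]
  have hpow : (P ^ k) *ᵥ x = x := hpowall k
  haveI : Nonempty (Fin S) := ⟨⟨0, hS⟩⟩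
  obtain ⟨i, -, hi⟩ := Finset.exists_max_image Finset.univ x ⟨⟨0, hS⟩, Finset.mem_univ _⟩
  refine ⟨x i, funext fun j => ?_⟩
  by_contra hne
  have hjlt : x j < x i := lt_of_le_of_ne (hi j (Finset.mem_univ j)) hne
  have hxi : ∑ l, (P ^ k) i l * x l = x i := by
    have := congrFun hpow i
    simpa [Matrix.mulVec, dotProduct] using this
  have hlt : ∑ l, (P ^ k) i l * x l < ∑ l, (P ^ k) i l * x i := by
    apply Finset.sum_lt_sum
    · intro l _
      exact mul_le_mul_of_nonneg_left (hi l (Finset.mem_univ l)) (le_of_lt (hk i l))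
    · exact ⟨j, Finset.mem_univ j, by
        exact mul_lt_mul_of_pos_left hjlt (hk i j)⟩
  rw [hxi] at hlt
  rw [← Finset.sum_mul, pow_row_sum P hst.2 k i, one_mul] at hlt
  exact lt_irrefl _ hlt

/-- The vector `g = (I − P + e·r)⁻¹ f` satisfies the Poisson equation
`g = f − η e + P g` with `η = π f`, and moreover `r·g = η`. -/
theorem potential_via_generalized_fundamental
    {S : ℕ} (hS : 0 < S) (P : Matrix (Fin S) (Fin S) ℝ)
    (hst : IsStochastic P) (hprim : _root_.IsPrimitive P)
    (π : Fin S → ℝ) (e : Fin S → ℝ) (he : e = fun _ => 1)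
    (hπP : π ᵥ* P = π) (hπe : π ⬝ᵥ e = 1)
    (f : Fin S → ℝ) (r : Fin S → ℝ) (hre : r ⬝ᵥ e ≠ 0)
    (g : Fin S → ℝ) (hg : g = (1 - P + vecMulVec e r)⁻¹ *ᵥ f) :
    g = f - (π ⬝ᵥ f) • e + P *ᵥ g ∧ r ⬝ᵥ g = π ⬝ᵥ f := by
  set A : Matrix (Fin S) (Fin S) ℝ := 1 - P + vecMulVec e r with hA
  -- A *ᵥ x = x - P *ᵥ x + (r ⬝ᵥ x) • e
  have hAmul : ∀ x : Fin S → ℝ, A *ᵥ x = x - P *ᵥ x + (r ⬝ᵥ x) • e := by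
    intro x
    rw [hA, Matrix.add_mulVec, Matrix.sub_mulVec, Matrix.one_mulVec]
    congr 1
    ext i
    simp [Matrix.mulVec, Matrix.vecMulVec_apply, dotProduct, Finset.mul_sum,
      Finset.sum_mul, mul_comm, mul_left_comm, mul_assoc]
  -- π ⬝ᵥ (P *ᵥ x) = π ⬝ᵥ x
  have hπmul : ∀ x : Fin S → ℝ, π ⬝ᵥ (P *ᵥ x) = π ⬝ᵥ x := by
    intro x
    rw [Matrix.dotProduct_mulVec, hπP]
  -- A has trivial kernel
  have hker : ∀ x : Fin S → ℝ, A *ᵥ x = 0 → x = 0 := by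
    intro x hx
    rw [hAmul] at hx
    have hπ0 : r ⬝ᵥ x = 0 := by
      have := congrArg (fun v => π ⬝ᵥ v) hx
      simpa [dotProduct_add, dotProduct_sub, dotProduct_smul, hπmul, hπe]
        using this
    rw [hπ0, zero_smul, add_zero, sub_eq_zero] at hx
    obtain ⟨c, hc⟩ := harmonic_const hS P hst hprim x hx.symm
    have : r ⬝ᵥ x = c * (r ⬝ᵥ e) := by
      simp [hc, he, dotProduct, Finset.sum_mul, mul_comm]
      ring_nf
      simp [Finset.mul_sum, mul_comm]
    rw [hπ0] at this
    have hc0 : c = 0 := by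
      rcases mul_eq_zero.mp this.symm with h | h
      · exact h
      · exact absurd h hre
    rw [hc, hc0]
    rfl
  have hinj : Function.Injective A.mulVec := by
    rw [← Matrix.coe_mulVecLin]
    rw [← LinearMap.ker_eq_bot, LinearMap.ker_eq_bot']
    intro x hx
    exact hker x (by simpa using hx)
  have hunit : IsUnit A := Matrix.mulVec_injective_iff_isUnit.mp hinj
  have hAg : A *ᵥ g = f := by
    rw [hg, Matrix.mulVec_mulVec, Matrix.mul_nonsing_inv A
      ((Matrix.isUnit_iff_isUnit_det A).mp hunit), Matrix.one_mulVec]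
  rw [hAmul] at hAg
  -- from hAg : g - P *ᵥ g + (r ⬝ᵥ g) • e = f
  have hrg : r ⬝ᵥ g = π ⬝ᵥ f := by
    have := congrArg (fun v => π ⬝ᵥ v) hAg
    simp only [dotProduct_add, dotProduct_sub, dotProduct_smul, hπmul,
      hπe, smul_eq_mul, mul_one, sub_self, zero_add] at this
    exact this
  constructor
  · have : g = f - (r ⬝ᵥ g) • e + P *ᵥ g := by
      rw [← hAg]; abel
    rwa [hrg] at this
  · exact hrg
end

section
/- Let P be an irreducible aperiodic finite stochastic matrix and r a row vector with 0 < r·e < 2. Then (I − P + e·r)^{-1} = Σ_{n=0}^∞ (P − e·r)^n, and the series converges. -/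
open Matrix

namespace NeumannAux
open Finset
variable {S : ℕ}

lemma stoch_mul {P Q : Matrix (Fin S) (Fin S) ℝ} (hP : IsStochastic P)
    (hQ : IsStochastic Q) : IsStochastic (P * Q) := by
  constructor
  · intro i j
    rw [mul_apply]
    exact Finset.sum_nonneg fun k _ => mul_nonneg (hP.1 i k) (hQ.1 k j)
  · intro i
    simp only [mul_apply]
    rw [Finset.sum_comm]
    have : ∀ k, ∑ j, P i k * Q k j = P i k := by
      intro k; rw [← Finset.mul_sum, hQ.2 k, mul_one]
    simp_rw [this]
    exact hP.2 i

lemma stoch_pow {P : Matrix (Fin S) (Fin S) ℝ} (hP : IsStochastic P) :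
    ∀ n, IsStochastic (P ^ n)
  | 0 => by
      constructor
      · intro i j; by_cases h : i = j <;> simp [one_apply, h]
      · intro i; simp [one_apply]
  | (n+1) => by
      rw [pow_succ]
      exact stoch_mul (stoch_pow hP n) hP

section Osc
variable [NeZero S]

noncomputable def osc (x : Fin S → ℝ) : ℝ :=
  univ.sup' univ_nonempty x - univ.inf' univ_nonempty x

lemma sub_le_osc (x : Fin S → ℝ) (i i' : Fin S) : x i - x i' ≤ osc x :=
  sub_le_sub (Finset.le_sup' x (mem_univ i)) (Finset.inf'_le x (mem_univ i'))

lemma osc_nonneg (x : Fin S → ℝ) : 0 ≤ osc x := by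
  have := sub_le_osc x (Classical.arbitrary _) (Classical.arbitrary _)
  simpa using this

lemma abs_sub_le_osc (x : Fin S → ℝ) (i i' : Fin S) : |x i - x i'| ≤ osc x := by
  rw [abs_sub_le_iff]
  exact ⟨sub_le_osc x i i', sub_le_osc x i' i⟩

lemma contraction {A : Matrix (Fin S) (Fin S) ℝ} (hA : IsStochastic A) {d : ℝ}
    (hd : ∀ i j, d ≤ A i j) (x : Fin S → ℝ) :
    osc (A *ᵥ x) ≤ (1 - S * d) * osc x := by
  set M := univ.sup' univ_nonempty x with hM
  set m := univ.inf' univ_nonempty x with hm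
  have hub : ∀ i, (A *ᵥ x) i ≤ d * ∑ k, x k + (1 - S * d) * M := by
    intro i
    have key : ∀ k : Fin S, A i k * x k = d * x k + (A i k - d) * x k := fun k => by ring
    have : (A *ᵥ x) i = ∑ k, d * x k + ∑ k, (A i k - d) * x k := by
      simp only [mulVec, dotProduct, key, Finset.sum_add_distrib]
    rw [this, ← Finset.mul_sum]
    gcongr
    calc ∑ k, (A i k - d) * x k ≤ ∑ k, (A i k - d) * M := by
          gcongr with k
          · exact sub_nonneg.2 (hd i k)
          · exact Finset.le_sup' x (mem_univ k)
      _ = (1 - S * d) * M := by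
          rw [← Finset.sum_mul, Finset.sum_sub_distrib, hA.2 i]
          simp [mul_comm]
  have hlb : ∀ i, d * ∑ k, x k + (1 - S * d) * m ≤ (A *ᵥ x) i := by
    intro i
    have key : ∀ k : Fin S, A i k * x k = d * x k + (A i k - d) * x k := fun k => by ring
    have : (A *ᵥ x) i = ∑ k, d * x k + ∑ k, (A i k - d) * x k := by
      simp only [mulVec, dotProduct, key, Finset.sum_add_distrib]
    rw [this, ← Finset.mul_sum]
    gcongr
    calc (1 - S * d) * m = ∑ k, (A i k - d) * m := by
          rw [← Finset.sum_mul, Finset.sum_sub_distrib, hA.2 i]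
          simp [mul_comm]
      _ ≤ ∑ k, (A i k - d) * x k := by
          gcongr with k
          · exact sub_nonneg.2 (hd i k)
          · exact Finset.inf'_le x (mem_univ k)
  obtain ⟨i₀, -, h₀⟩ := Finset.exists_mem_eq_sup' (univ_nonempty) (A *ᵥ x)
  obtain ⟨i₁, -, h₁⟩ := Finset.exists_mem_eq_inf' (univ_nonempty) (A *ᵥ x)
  have : osc (A *ᵥ x) = (A *ᵥ x) i₀ - (A *ᵥ x) i₁ := by rw [osc, ← h₀, ← h₁]
  have hosc : osc x = M - m := rfl
  rw [this, hosc]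
  nlinarith [hub i₀, hlb i₁]

lemma decay {P : Matrix (Fin S) (Fin S) ℝ} {k : ℕ} (hk : 0 < k) {c : ℝ}
    (hc0 : 0 < c) (hc1 : c < 1)
    (hmono : ∀ x : Fin S → ℝ, osc (P *ᵥ x) ≤ osc x)
    (hcon : ∀ x : Fin S → ℝ, osc ((P ^ k) *ᵥ x) ≤ c * osc x) :
    ∀ n (x : Fin S → ℝ), osc ((P ^ n) *ᵥ x) ≤ c⁻¹ * (c ^ ((k:ℝ)⁻¹)) ^ n * osc x := by
  set t : ℝ := c ^ ((k:ℝ)⁻¹) with ht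
  have ht0 : 0 < t := Real.rpow_pos_of_pos hc0 _
  have ht1 : t < 1 := Real.rpow_lt_one hc0.le hc1 (by positivity)
  have htk : t ^ k = c := by
    rw [ht, ← Real.rpow_natCast (c ^ ((k:ℝ)⁻¹)) k, ← Real.rpow_mul hc0.le,
      inv_mul_cancel₀ (by exact_mod_cast hk.ne'), Real.rpow_one]
  have hmonopow : ∀ n (x : Fin S → ℝ), osc ((P ^ n) *ᵥ x) ≤ osc x := by
    intro n
    induction n with
    | zero => intro x; simp [osc]
    | succ n ih =>
      intro x
      have : P ^ (n+1) *ᵥ x = P ^ n *ᵥ (P *ᵥ x) := by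
        rw [mulVec_mulVec, ← pow_succ]
      rw [this]
      exact (ih (P *ᵥ x)).trans (by simpa using hmono x)
  intro n
  induction n using Nat.strong_induction_on with
  | _ n ih =>
    intro x
    rcases lt_or_ge n k with h | h
    · have h1 : osc ((P ^ n) *ᵥ x) ≤ osc x := hmonopow n x
      have h2 : c ≤ t ^ n := by
        rw [← htk]
        exact pow_le_pow_of_le_one ht0.le ht1.le h.le
      have h3 : (1:ℝ) ≤ c⁻¹ * t ^ n := by
        rw [← div_eq_inv_mul, le_div_iff₀ hc0, one_mul]; exact h2
      calc osc ((P ^ n) *ᵥ x) ≤ osc x := h1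
        _ ≤ (c⁻¹ * t ^ n) * osc x := le_mul_of_one_le_left (osc_nonneg x) h3
    · have hsplit : P ^ n *ᵥ x = P ^ k *ᵥ (P ^ (n - k) *ᵥ x) := by
        rw [mulVec_mulVec, ← pow_add, Nat.add_sub_cancel' h]
      have hlt : n - k < n := Nat.sub_lt (hk.trans_le h) hk
      calc osc ((P ^ n) *ᵥ x) = osc ((P ^ k) *ᵥ ((P ^ (n-k)) *ᵥ x)) := by rw [hsplit]
        _ ≤ c * osc ((P ^ (n-k)) *ᵥ x) := hcon _
        _ ≤ c * (c⁻¹ * t ^ (n-k) * osc x) := by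
            have := ih (n-k) hlt x
            nlinarith [osc_nonneg ((P ^ (n-k)) *ᵥ x)]
        _ = c⁻¹ * t ^ n * osc x := by
            have htn : t ^ n = c * t ^ (n - k) := by
              rw [← htk, ← pow_add, Nat.add_sub_cancel' h]
            rw [htn]
            field_simp

end Osc

lemma recc {P v : Matrix (Fin S) (Fin S) ℝ} {α : ℝ}
    (hPv : P * v = v) (hvv : v * v = α • v) :
    ∀ n, (P - v) ^ (n+1) =
      (1 - α) • (P - v) ^ n + (P ^ (n+1) - (1 - α) • P ^ n - v * P ^ n) := by
  intro n
  induction n with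
  | zero => simp [pow_one]; abel
  | succ n ih =>
    have hQv : (P - v) * v = (1 - α) • v := by
      rw [sub_mul, hPv, hvv]
      rw [sub_smul, one_smul]
    calc (P - v) ^ (n+2) = (P - v) * (P - v) ^ (n+1) := by rw [← pow_succ']
      _ = (P - v) * ((1 - α) • (P - v) ^ n + (P ^ (n+1) - (1 - α) • P ^ n - v * P ^ n)) := by
          rw [ih]
      _ = (1 - α) • ((P - v) * (P - v) ^ n) + ((P - v) * P ^ (n+1)
            - (1 - α) • ((P - v) * P ^ n) - ((P - v) * v) * P ^ n) := by
          rw [mul_add, mul_sub, mul_sub, mul_smul_comm, mul_smul_comm, mul_assoc]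
      _ = (1 - α) • (P - v) ^ (n+1) + (P ^ (n+2) - (1 - α) • P ^ (n+1) - v * P ^ (n+1)) := by
          rw [hQv, ← pow_succ', sub_mul, sub_mul, ← pow_succ', ← pow_succ', smul_mul_assoc]
          rw [smul_sub]
          abel

/-- the key entrywise geometric-type bound -/
lemma key [NeZero S] (P : Matrix (Fin S) (Fin S) ℝ)
    (hst : IsStochastic P) (hprim : _root_.IsPrimitive P)
    (r : Fin S → ℝ) (hre : 0 < ∑ s, r s) (hre2 : ∑ s, r s < 2) :
    ∃ K T : ℝ, 0 ≤ K ∧ 0 ≤ T ∧ T < 1 ∧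
      ∀ (n : ℕ) (i j : Fin S),
        |(((P - vecMulVec (fun _ : Fin S => (1:ℝ)) r) ^ n : Matrix (Fin S) (Fin S) ℝ)) i j|
          ≤ (1 + K * n) * T ^ n := by
  classical
  obtain ⟨k, hk⟩ := hprim
  -- positivity of P ^ (k+1)
  have hpos : ∀ i j, 0 < (P ^ (k+1)) i j := by
    intro i j
    have hstep : (P ^ (k+1)) i j = ∑ s, P i s * (P ^ k) s j := by
      rw [pow_succ', mul_apply]
    rw [hstep]
    have hex : ∃ s : Fin S, 0 < P i s := by
      by_contra hno
      push_neg at hno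
      have h0 : ∑ s, P i s ≤ 0 := Finset.sum_nonpos fun s _ => hno s
      rw [hst.2 i] at h0; linarith
    obtain ⟨s₀, hs₀⟩ := hex
    exact Finset.sum_pos' (fun s _ => mul_nonneg (hst.1 i s) (hk s j).le)
      ⟨s₀, mem_univ s₀, mul_pos hs₀ (hk s₀ j)⟩
  set k' : ℕ := k + 1 with hk'
  have hstk' : IsStochastic (P ^ k') := stoch_pow hst k'
  -- minimal entry δ
  set δ : ℝ := (univ : Finset (Fin S × Fin S)).inf' univ_nonempty (fun p => (P ^ k') p.1 p.2)
    with hδ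
  have hδle : ∀ i j, δ ≤ (P ^ k') i j := fun i j =>
    Finset.inf'_le _ (mem_univ (i, j))
  have hδ0 : 0 < δ := by
    obtain ⟨p, -, hp⟩ := Finset.exists_mem_eq_inf'
      (univ_nonempty : (univ : Finset (Fin S × Fin S)).Nonempty)
      (fun p => (P ^ k') p.1 p.2)
    rw [hδ, hp]
    exact hpos p.1 p.2
  have hS0 : (0:ℝ) < S := by
    have : (0:ℕ) < S := Nat.pos_of_ne_zero (NeZero.ne S)
    exact_mod_cast this
  have hSδ : (S:ℝ) * δ ≤ 1 := by
    obtain ⟨i₀⟩ := (inferInstance : Nonempty (Fin S))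
    have h1 : ∑ j, δ ≤ ∑ j, (P ^ k') i₀ j := Finset.sum_le_sum fun j _ => hδle i₀ j
    rw [hstk'.2 i₀] at h1
    simpa [mul_comm] using h1
  -- contraction constant
  set c : ℝ := max (1 - S * δ) 2⁻¹ with hc
  have hc0 : 0 < c := lt_of_lt_of_le (by norm_num) (le_max_right _ _)
  have hc1 : c < 1 := max_lt (by nlinarith) (by norm_num)
  have hmono : ∀ x : Fin S → ℝ, osc (P *ᵥ x) ≤ osc x := by
    intro x
    have := contraction hst (d := 0) (fun i j => hst.1 i j) x
    simpa using this
  have hcon : ∀ x : Fin S → ℝ, osc ((P ^ k') *ᵥ x) ≤ c * osc x := by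
    intro x
    calc osc ((P ^ k') *ᵥ x) ≤ (1 - S * δ) * osc x := contraction hstk' hδle x
      _ ≤ c * osc x := mul_le_mul_of_nonneg_right (le_max_left _ _) (osc_nonneg x)
  set t : ℝ := c ^ ((k':ℝ)⁻¹) with htdef
  have ht0 : 0 < t := Real.rpow_pos_of_pos hc0 _
  have ht1 : t < 1 := Real.rpow_lt_one hc0.le hc1 (by positivity)
  have hdecay : ∀ n (x : Fin S → ℝ), osc ((P ^ n) *ᵥ x) ≤ c⁻¹ * t ^ n * osc x :=
    decay (Nat.succ_pos k) hc0 hc1 hmono hcon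
  -- column vectors
  set α : ℝ := ∑ s, r s with hα
  set β : ℝ := 1 - α with hβ
  have hβ1 : |β| < 1 := abs_lt.2 ⟨by rw [hβ]; linarith, by rw [hβ]; linarith⟩
  set R : ℝ := ∑ s, |r s| with hR
  have hR0 : 0 ≤ R := Finset.sum_nonneg fun s _ => abs_nonneg _
  set K0 : ℝ := (1 + R) * c⁻¹ with hK0def
  have hK00 : 0 ≤ K0 := by positivity
  -- oscillation of columns of P ^ n
  have hcol : ∀ n (j : Fin S), osc (fun s => (P ^ n) s j) ≤ c⁻¹ * t ^ n := by
    intro n j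
    set x : Fin S → ℝ := fun s => if s = j then 1 else 0 with hx
    have hyx : (fun s => (P ^ n) s j) = (P ^ n) *ᵥ x := by
      funext s
      simp [hx, mulVec, dotProduct]
    have hoscx : osc x ≤ 1 := by
      have h1 : univ.sup' univ_nonempty x ≤ 1 := Finset.sup'_le _ _ fun s _ => by
        simp only [hx]; split <;> norm_num
      have h2 : (0:ℝ) ≤ univ.inf' univ_nonempty x := Finset.le_inf' _ _ fun s _ => by
        simp only [hx]; split <;> norm_num
      rw [osc]; linarith
    calc osc (fun s => (P ^ n) s j) ≤ c⁻¹ * t ^ n * osc x := by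
          rw [hyx]; exact hdecay n x
      _ ≤ c⁻¹ * t ^ n * 1 := by
          apply mul_le_mul_of_nonneg_left hoscx
          positivity
      _ = c⁻¹ * t ^ n := mul_one _
  -- the inhomogeneous term bound
  have hH : ∀ n (i j : Fin S),
      |(P ^ (n+1)) i j - β * (P ^ n) i j - ∑ s, r s * (P ^ n) s j| ≤ K0 * t ^ n := by
    intro n i j
    set y : Fin S → ℝ := fun s => (P ^ n) s j with hy
    have hβsum : β = ∑ s, (P i s - r s) := by
      rw [Finset.sum_sub_distrib, hst.2 i, hβ, hα]
    have hexp : (P ^ (n+1)) i j = ∑ s, P i s * y s := by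
      rw [pow_succ', mul_apply]
    have hrw : (P ^ (n+1)) i j - β * (P ^ n) i j - ∑ s, r s * (P ^ n) s j
        = ∑ s, (P i s - r s) * (y s - y i) := by
      rw [hexp, hβsum, Finset.sum_mul]
      have : (P ^ n) i j = y i := rfl
      rw [this]
      rw [← Finset.sum_sub_distrib, ← Finset.sum_sub_distrib]
      exact Finset.sum_congr rfl fun s _ => by simp only [hy]; ring
    rw [hrw]
    calc |∑ s, (P i s - r s) * (y s - y i)|
        ≤ ∑ s, |(P i s - r s) * (y s - y i)| := Finset.abs_sum_le_sum_abs _ _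
      _ ≤ ∑ s, (P i s + |r s|) * osc y := by
          apply Finset.sum_le_sum
          intro s _
          rw [abs_mul]
          refine mul_le_mul ?_ (abs_sub_le_osc y s i) (abs_nonneg _)
            (add_nonneg (hst.1 i s) (abs_nonneg _))
          calc |P i s - r s| ≤ |P i s| + |r s| := abs_sub _ _
            _ = P i s + |r s| := by rw [abs_of_nonneg (hst.1 i s)]
      _ = (1 + R) * osc y := by
          rw [← Finset.sum_mul, Finset.sum_add_distrib, hst.2 i, hR]
      _ ≤ (1 + R) * (c⁻¹ * t ^ n) := by
          apply mul_le_mul_of_nonneg_left (hcol n j)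
          linarith
      _ = K0 * t ^ n := by rw [hK0def]; ring
  -- assemble
  set T : ℝ := max (max t |β|) 2⁻¹ with hT
  have hTt : t ≤ T := le_trans (le_max_left _ _) (le_max_left _ _)
  have hTβ : |β| ≤ T := le_trans (le_max_right _ _) (le_max_left _ _)
  have hThalf : (2⁻¹:ℝ) ≤ T := le_max_right _ _
  have hT1 : T < 1 := max_lt (max_lt ht1 hβ1) (by norm_num)
  have hT0 : (0:ℝ) ≤ T := le_trans (by norm_num) hThalf
  -- matrix identities for rank-one part
  have hPv : P * vecMulVec (fun _ : Fin S => (1:ℝ)) r = vecMulVec (fun _ : Fin S => (1:ℝ)) r := by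
    ext i' j'
    rw [mul_apply]
    simp only [vecMulVec_apply]
    calc ∑ s, P i' s * ((fun _ : Fin S => (1:ℝ)) s * r j') = (∑ s, P i' s) * r j' := by
          rw [Finset.sum_mul]
          try exact Finset.sum_congr rfl fun s _ => by ring
      _ = (fun _ : Fin S => (1:ℝ)) i' * r j' := by
            rw [hst.2 i']
            try ring
  have hvv : vecMulVec (fun _ : Fin S => (1:ℝ)) r * vecMulVec (fun _ : Fin S => (1:ℝ)) r
      = α • vecMulVec (fun _ : Fin S => (1:ℝ)) r := by
    ext i' j'
    rw [mul_apply, Matrix.smul_apply]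
    simp only [vecMulVec_apply, smul_eq_mul]
    calc ∑ s, ((fun _ : Fin S => (1:ℝ)) i' * r s) * ((fun _ : Fin S => (1:ℝ)) s * r j')
        = (∑ s, r s) * r j' := by
          rw [Finset.sum_mul]
          try exact Finset.sum_congr rfl fun s _ => by ring
      _ = α * ((fun _ : Fin S => (1:ℝ)) i' * r j') := by
            rw [hα]
            try ring
  refine ⟨2 * K0, T, by positivity, hT0, hT1, ?_⟩
  intro n i j
  induction n with
  | zero =>
    simp only [pow_zero]
    have : |(1 : Matrix (Fin S) (Fin S) ℝ) i j| ≤ 1 := by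
      rw [one_apply]; split <;> norm_num
    simpa using this
  | succ n ih =>
    have hrec := recc hPv hvv n
    have hv : (vecMulVec (fun _ : Fin S => (1:ℝ)) r * P ^ n) i j = ∑ s, r s * (P ^ n) s j := by
      rw [mul_apply]
      exact Finset.sum_congr rfl fun s _ => by rw [vecMulVec_apply]; ring
    have hentry : ((P - vecMulVec (fun _ : Fin S => (1:ℝ)) r) ^ (n+1)) i j
        = β * ((P - vecMulVec (fun _ : Fin S => (1:ℝ)) r) ^ n) i j
          + ((P ^ (n+1)) i j - β * (P ^ n) i j - ∑ s, r s * (P ^ n) s j) := by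
      calc ((P - vecMulVec (fun _ : Fin S => (1:ℝ)) r) ^ (n+1)) i j
          = ((1 - α) • (P - vecMulVec (fun _ : Fin S => (1:ℝ)) r) ^ n
            + (P ^ (n+1) - (1 - α) • P ^ n - vecMulVec (fun _ : Fin S => (1:ℝ)) r * P ^ n)) i j := by
            rw [hrec]
        _ = _ := by
            simp only [Matrix.add_apply, Matrix.sub_apply, Matrix.smul_apply, smul_eq_mul, hv, ← hβ]
    rw [hentry]
    set A : ℝ := ((P - vecMulVec (fun _ : Fin S => (1:ℝ)) r) ^ n) i j with hA
    set B : ℝ := (P ^ (n+1)) i j - β * (P ^ n) i j - ∑ s, r s * (P ^ n) s j with hB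
    have h1 : |β * A + B| ≤ |β| * |A| + |B| := by
      calc |β * A + B| ≤ |β * A| + |B| := abs_add_le _ _
        _ = |β| * |A| + |B| := by rw [abs_mul]
    have h2 : |A| ≤ (1 + 2 * K0 * n) * T ^ n := ih
    have h3 : |B| ≤ K0 * t ^ n := hH n i j
    have htT : t ^ n ≤ T ^ n := pow_le_pow_left₀ ht0.le hTt n
    have hgoal : |β| * |A| + |B| ≤ (1 + 2 * K0 * (n+1 : ℕ)) * T ^ (n+1) := by
      push_cast
      rw [pow_succ]
      nlinarith [mul_nonneg hK00 (pow_nonneg hT0 n), abs_nonneg A, pow_nonneg hT0 n,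
        mul_le_mul hTβ h2 (abs_nonneg A) hT0,
        mul_le_mul_of_nonneg_left htT hK00,
        mul_nonneg (mul_nonneg hK00 (pow_nonneg hT0 n)) (by linarith : (0:ℝ) ≤ 2*T - 1),
        mul_nonneg hK00 (mul_nonneg (pow_nonneg hT0 n) (Nat.cast_nonneg n))]
    exact h1.trans hgoal

end NeumannAux

/-- If `0 < r·e < 2`, then the Neumann series `Σ (P − e·r)ⁿ` converges and
equals `(I − P + e·r)⁻¹`. -/
theorem generalized_fundamental_neumann_series
    {S : ℕ} (hS : 0 < S) (P : Matrix (Fin S) (Fin S) ℝ)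
    (hst : IsStochastic P) (hprim : _root_.IsPrimitive P)
    (r : Fin S → ℝ) (e : Fin S → ℝ) (he : e = fun _ => 1)
    (hre : 0 < r ⬝ᵥ e) (hre2 : r ⬝ᵥ e < 2) :
    Summable (fun n : ℕ => (P - vecMulVec e r) ^ n) ∧
    (1 - P + vecMulVec e r)⁻¹ = ∑' n : ℕ, (P - vecMulVec e r) ^ n := by
  haveI : NeZero S := ⟨hS.ne'⟩
  subst he
  have hdot : r ⬝ᵥ (fun _ : Fin S => (1:ℝ)) = ∑ s, r s := by
    simp [dotProduct]
  rw [hdot] at hre hre2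
  obtain ⟨K, T, hK, hT0, hT1, hb⟩ := NeumannAux.key P hst hprim r hre hre2
  set Q : Matrix (Fin S) (Fin S) ℝ := P - vecMulVec (fun _ : Fin S => (1:ℝ)) r with hQ
  have hmaj : Summable (fun n : ℕ => (1 + K * n) * T ^ n) := by
    have h1 : Summable (fun n : ℕ => T ^ n) := summable_geometric_of_lt_one hT0 hT1
    have h2 : Summable (fun n : ℕ => (n:ℝ) * T ^ n) := by
      have := summable_pow_mul_geometric_of_norm_lt_one 1 (r := T)
        (by rwa [Real.norm_eq_abs, abs_of_nonneg hT0])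
      simpa using this
    have h3 := h1.add (h2.mul_left K)
    apply h3.congr
    intro n
    ring
  have hent : ∀ i j, Summable fun n : ℕ => (Q ^ n) i j := by
    intro i j
    apply Summable.of_abs
    exact hmaj.of_nonneg_of_le (fun n => abs_nonneg _) (fun n => hb n i j)
  set M : Matrix (Fin S) (Fin S) ℝ := Matrix.of fun i j => ∑' n : ℕ, (Q ^ n) i j with hM
  have hhs : HasSum (fun n : ℕ => Q ^ n) M := by
    refine Pi.hasSum.2 ?_
    intro i
    rw [Pi.hasSum]
    intro j
    exact (hent i j).hasSum
  refine ⟨⟨M, hhs⟩, ?_⟩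
  rw [hhs.tsum_eq]
  have h1Q : 1 - P + vecMulVec (fun _ : Fin S => (1:ℝ)) r = 1 - Q := by
    rw [hQ, sub_add]
  rw [h1Q]
  apply Matrix.inv_eq_right_inv
  ext i j
  rw [mul_apply]
  calc ∑ kk, (1 - Q) i kk * M kk j
      = ∑ kk, ∑' n : ℕ, (1 - Q) i kk * (Q ^ n) kk j :=
        Finset.sum_congr rfl fun kk _ => (tsum_mul_left).symm
    _ = ∑' n : ℕ, ∑ kk, (1 - Q) i kk * (Q ^ n) kk j :=
        (Summable.tsum_finsetSum fun kk _ => (hent kk j).mul_left _).symm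
    _ = ∑' n : ℕ, ((Q ^ n) i j - (Q ^ (n+1)) i j) := by
        apply tsum_congr
        intro n
        rw [← mul_apply]
        have h2 : (1 - Q) * Q ^ n = Q ^ n - Q ^ (n+1) := by
          rw [sub_mul, one_mul, ← pow_succ']
        rw [h2, Matrix.sub_apply]
    _ = (1 : Matrix (Fin S) (Fin S) ℝ) i j := by
        have hs1 := hent i j
        have hs2 : Summable fun n : ℕ => (Q ^ (n+1)) i j := by
          have h := hs1.comp_injective (add_left_injective 1)
          simpa [Function.comp_def] using h
        rw [Summable.tsum_sub hs1 hs2, Summable.tsum_eq_zero_add hs1]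
        simp
end

section
/- Let P be an irreducible aperiodic finite stochastic matrix with stationary distribution π, and r a row vector with r·e = 1 and ρ(P − e·r) < 1. Then (I − P + e·r)^{-1} = Σ_{n=0}^∞ (P^n − e·r·P^n) + e·π. -/
open Matrix

open Filter Finset
open scoped Topology ENNReal

section AuxLemmas

variable {S : ℕ}

private lemma mul_vecMulVec' (M : Matrix (Fin S) (Fin S) ℝ) (u v : Fin S → ℝ) :
    M * vecMulVec u v = vecMulVec (M *ᵥ u) v := by
  ext i j
  simp only [Matrix.mul_apply, vecMulVec_apply, Matrix.mulVec, dotProduct, Finset.sum_mul]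
  exact Finset.sum_congr rfl fun k _ => by ring

private lemma vecMulVec_mul' (u v : Fin S → ℝ) (M : Matrix (Fin S) (Fin S) ℝ) :
    vecMulVec u v * M = vecMulVec u (v ᵥ* M) := by
  ext i j
  simp only [Matrix.mul_apply, vecMulVec_apply, Matrix.vecMul, dotProduct, Finset.mul_sum]
  exact Finset.sum_congr rfl fun k _ => by ring

private lemma vecMulVec_mul_vecMulVec' (u v w z : Fin S → ℝ) :
    vecMulVec u v * vecMulVec w z = (v ⬝ᵥ w) • vecMulVec u z := by
  ext i j
  simp only [Matrix.mul_apply, vecMulVec_apply, Matrix.smul_apply, dotProduct, smul_eq_mul,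
    Finset.sum_mul]
  exact Finset.sum_congr rfl fun k _ => by ring

private lemma pow_mulVec_e (P : Matrix (Fin S) (Fin S) ℝ) (e : Fin S → ℝ)
    (hPe : P *ᵥ e = e) (n : ℕ) : P ^ n *ᵥ e = e := by
  induction n with
  | zero => simp [Matrix.one_mulVec]
  | succ n ih => rw [pow_succ', ← Matrix.mulVec_mulVec, ih, hPe]

private lemma key_identity (P : Matrix (Fin S) (Fin S) ℝ) (e r : Fin S → ℝ)
    (hPe : P *ᵥ e = e) (hre : r ⬝ᵥ e = 1) (n : ℕ) :
    (1 - vecMulVec e r) * (P - vecMulVec e r) ^ n = P ^ n - vecMulVec e r * P ^ n := by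
  set Q := vecMulVec e r with hQ
  have hQ2 : Q * Q = Q := by
    rw [hQ, vecMulVec_mul_vecMulVec', hre, one_smul]
  induction n with
  | zero => simp
  | succ n ih =>
    have hPnQ : P ^ n * Q = Q := by
      rw [hQ, mul_vecMulVec', pow_mulVec_e P e hPe]
    rw [pow_succ, ← mul_assoc, ih, sub_mul, mul_sub, mul_sub, hPnQ,
      mul_assoc Q (P ^ n) Q, hPnQ, hQ2, mul_assoc Q (P ^ n) P, ← pow_succ]
    abel

private lemma aux_norm_pow_le {A : Type*} [NormedRing A] [NormedAlgebra ℂ A] [CompleteSpace A]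
    (a : A) (h : spectralRadius ℂ a < 1) :
    ∃ c : ℝ, 0 ≤ c ∧ c < 1 ∧ ∀ᶠ n : ℕ in atTop, ‖a ^ n‖ ≤ c ^ n := by
  obtain ⟨c, hc1, hc2⟩ := exists_between h
  have hcne : c ≠ ∞ := (hc2.trans_le le_top).ne
  refine ⟨c.toReal, ENNReal.toReal_nonneg, ?_, ?_⟩
  · have := ENNReal.toReal_strict_mono ENNReal.one_ne_top hc2
    simpa using this
  · have hev : ∀ᶠ n : ℕ in atTop, (‖a ^ n‖₊ : ℝ≥0∞) ^ (1 / n : ℝ) < c :=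
      (spectrum.pow_nnnorm_pow_one_div_tendsto_nhds_spectralRadius a).eventually_lt_const hc1
    filter_upwards [hev, eventually_ge_atTop 1] with n hn hn1
    have hnne : (n : ℝ) ≠ 0 := by positivity
    have h1 : (‖a ^ n‖₊ : ℝ≥0∞) < c ^ n := by
      have h2 : ((‖a ^ n‖₊ : ℝ≥0∞) ^ (1 / n : ℝ)) ^ (n : ℝ) < c ^ (n : ℝ) :=
        ENNReal.rpow_lt_rpow hn (by positivity)
      rwa [← ENNReal.rpow_mul, one_div_mul_cancel hnne, ENNReal.rpow_one,
        ENNReal.rpow_natCast] at h2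
    have h3 := ENNReal.toReal_mono (by simp [hcne]) h1.le
    simpa [ENNReal.toReal_pow] using h3

private lemma map_mulVec' (M : Matrix (Fin S) (Fin S) ℝ) (v : Fin S → ℝ) :
    (M.map (fun t => (t : ℂ))) *ᵥ (fun i => (v i : ℂ)) = fun i => (((M *ᵥ v) i : ℝ) : ℂ) := by
  ext i
  simp only [Matrix.mulVec, dotProduct, Matrix.map_apply]
  push_cast
  rfl

open scoped Matrix.Norms.L2Operator in
private lemma aux_norm_le (M : Matrix (Fin S) (Fin S) ℝ) :
    ‖M‖ ≤ ‖M.map (fun t => (t : ℂ))‖ := by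
  rw [Matrix.cstar_norm_def]
  refine ContinuousLinearMap.opNorm_le_bound _ (norm_nonneg _) fun x => ?_
  set v : Fin S → ℝ := WithLp.equiv 2 _ x with hv
  set vC : Fin S → ℂ := fun i => (v i : ℂ) with hvC
  set y : EuclideanSpace ℂ (Fin S) := (WithLp.equiv 2 _).symm vC with hy
  have hxy : ‖y‖ = ‖x‖ := by
    rw [EuclideanSpace.norm_eq, EuclideanSpace.norm_eq]
    congr 1
    refine Finset.sum_congr rfl fun i _ => ?_
    simp [hy, hvC, hv, Complex.norm_real]
  have h1 : toEuclideanCLM (𝕜 := ℝ) M x = (WithLp.equiv 2 _).symm (M *ᵥ v) := by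
    conv_lhs => rw [← (WithLp.equiv 2 _).symm_apply_apply x]
    rfl
  have h2 : ‖toEuclideanCLM (𝕜 := ℝ) M x‖
      = ‖(EuclideanSpace.equiv (Fin S) ℂ).symm ((M.map (fun t => (t : ℂ))) *ᵥ y)‖ := by
    rw [h1, EuclideanSpace.norm_eq, EuclideanSpace.norm_eq]
    congr 1
    refine Finset.sum_congr rfl fun i _ => ?_
    have : ((M.map (fun t => (t : ℂ))) *ᵥ (y : Fin S → ℂ)) i = (((M *ᵥ v) i : ℝ) : ℂ) := by
      rw [show (y : Fin S → ℂ) = vC from rfl, hvC, map_mulVec']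
    simp [this, Complex.norm_real]
  rw [h2, ← hxy]
  exact Matrix.l2_opNorm_mulVec _ y

open scoped Matrix.Norms.L2Operator in
private lemma aux_key (P Q : Matrix (Fin S) (Fin S) ℝ)
    (hkey : ∀ n : ℕ, (1 - Q) * (P - Q) ^ n = P ^ n - Q * P ^ n)
    (hdet : IsUnit (1 - (P - Q)).det)
    (hρ : spectralRadius ℂ ((P - Q).map (fun t => (t : ℂ))) < 1) :
    Summable (fun n : ℕ => P ^ n - Q * P ^ n) ∧
      (∑' n : ℕ, (P ^ n - Q * P ^ n)) = (1 - Q) * (1 - (P - Q))⁻¹ := by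
  set A := P - Q with hA
  obtain ⟨c, hc0, hc1, hcev⟩ := aux_norm_pow_le (A.map (fun t => (t : ℂ))) hρ
  have hmap : ∀ n : ℕ, (A ^ n).map (fun t => (t : ℂ)) = (A.map (fun t => (t : ℂ))) ^ n := by
    intro n
    have : ∀ B : Matrix (Fin S) (Fin S) ℝ, B.map (fun t => (t : ℂ))
        = (algebraMap ℝ ℂ).mapMatrix B := fun _ => rfl
    rw [this, this, map_pow]
  have hbound : ∀ᶠ n : ℕ in atTop, ‖A ^ n‖ ≤ c ^ n := by
    filter_upwards [hcev] with n hn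
    calc ‖A ^ n‖ ≤ ‖(A ^ n).map (fun t => (t : ℂ))‖ := aux_norm_le _
      _ = ‖(A.map (fun t => (t : ℂ))) ^ n‖ := by rw [hmap]
      _ ≤ c ^ n := hn
  have hsumA : Summable (fun n : ℕ => A ^ n) :=
    Summable.of_norm_bounded_eventually_nat (summable_geometric_of_lt_one hc0 hc1) hbound
  have htend0 : Tendsto (fun n : ℕ => A ^ n) atTop (𝓝 0) :=
    squeeze_zero_norm' hbound (tendsto_pow_atTop_nhds_zero_of_lt_one hc0 hc1)
  have hpart : ∀ N : ℕ, (∑ n ∈ range N, A ^ n) = (1 - A)⁻¹ * (1 - A ^ N) := by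
    intro N
    have h := mul_neg_geom_sum A N
    calc (∑ n ∈ range N, A ^ n) = (1 - A)⁻¹ * ((1 - A) * ∑ n ∈ range N, A ^ n) := by
          rw [← mul_assoc, Matrix.nonsing_inv_mul _ hdet, one_mul]
      _ = (1 - A)⁻¹ * (1 - A ^ N) := by rw [h]
  have htendS : Tendsto (fun N : ℕ => ∑ n ∈ range N, A ^ n) atTop (𝓝 ((1 - A)⁻¹)) := by
    have : Tendsto (fun N : ℕ => (1 - A)⁻¹ * (1 - A ^ N)) atTop (𝓝 ((1 - A)⁻¹ * (1 - 0))) :=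
      (tendsto_const_nhds.sub htend0).const_mul _
    simp only [sub_zero, mul_one] at this
    simpa only [hpart] using this
  have htsumA : (∑' n : ℕ, A ^ n) = (1 - A)⁻¹ :=
    tendsto_nhds_unique hsumA.hasSum.tendsto_sum_nat htendS
  have hfun : (fun n : ℕ => P ^ n - Q * P ^ n) = fun n : ℕ => (1 - Q) * A ^ n :=
    funext fun n => (hkey n).symm
  constructor
  · rw [hfun]; exact hsumA.mul_left _
  · rw [hfun, hsumA.tsum_mul_left, htsumA]

open scoped Matrix.Norms.L2Operator in
private lemma aux_det (A : Matrix (Fin S) (Fin S) ℝ)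
    (hρ : spectralRadius ℂ (A.map (fun t => (t : ℂ))) < 1) :
    IsUnit (1 - A).det := by
  have hmem : (1 : ℂ) ∈ resolventSet ℂ (A.map (fun t => (t : ℂ))) :=
    spectrum.mem_resolventSet_of_spectralRadius_lt (by simpa using hρ)
  rw [spectrum.mem_resolventSet_iff] at hmem
  have h1 : ∀ B : Matrix (Fin S) (Fin S) ℝ, B.map (fun t => (t : ℂ))
      = (algebraMap ℝ ℂ).mapMatrix B := fun _ => rfl
  have hmap : (algebraMap ℂ (Matrix (Fin S) (Fin S) ℂ)) 1 - A.map (fun t => (t : ℂ))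
      = ((1 - A).map (fun t => (t : ℂ))) := by
    rw [h1, h1, map_sub, _root_.map_one, _root_.map_one]
  rw [hmap] at hmem
  have hdetC : IsUnit (((1 - A).map (fun t => (t : ℂ)))).det :=
    (Matrix.isUnit_iff_isUnit_det _).mp hmem
  have heq : ((1 - A).map (fun t => (t : ℂ))).det = (((1 - A).det : ℝ) : ℂ) := by
    rw [h1, ← RingHom.map_det]
    rfl
  rw [heq, isUnit_iff_ne_zero] at hdetC
  rw [isUnit_iff_ne_zero]
  exact fun h => hdetC (by rw [h, Complex.ofReal_zero])

end AuxLemmas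

/-- If `r·e = 1` and `ρ(P − e·r) < 1`, then
`(I − P + e·r)⁻¹ = Σₙ (Pⁿ − e·r·Pⁿ) + e·π`. -/
theorem generalized_fundamental_series_representation
    {S : ℕ} (hS : 0 < S) (P : Matrix (Fin S) (Fin S) ℝ)
    (hst : IsStochastic P) (hprim : _root_.IsPrimitive P)
    (π : Fin S → ℝ) (e : Fin S → ℝ) (he : e = fun _ => 1)
    (hπP : π ᵥ* P = π) (hπe : π ⬝ᵥ e = 1)
    (r : Fin S → ℝ) (hre : r ⬝ᵥ e = 1)
    (hρ : spectralRadius ℂ ((P - vecMulVec e r).map (fun t => (t : ℂ))) < 1) :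
    Summable (fun n : ℕ => P ^ n - vecMulVec e r * P ^ n) ∧
    (1 - P + vecMulVec e r)⁻¹ =
      (∑' n : ℕ, (P ^ n - vecMulVec e r * P ^ n)) + vecMulVec e π := by
  set Q := vecMulVec e r with hQdef
  have hPe : P *ᵥ e = e := by
    ext i
    simp [Matrix.mulVec, dotProduct, he, hst.2 i]
  have hdet : IsUnit (1 - (P - Q)).det := aux_det (P - Q) hρ
  obtain ⟨hsum, htsum⟩ := aux_key P Q (key_identity P e r hPe hre) hdet hρ
  refine ⟨hsum, ?_⟩
  have hrw : 1 - P + Q = 1 - (P - Q) := by abel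
  rw [hrw, htsum]
  have heπ : vecMulVec e π * (1 - (P - Q)) = Q := by
    rw [mul_sub, mul_one, mul_sub, vecMulVec_mul', hπP, hQdef,
      vecMulVec_mul_vecMulVec', hπe, one_smul]
    abel
  have hQB : Q * (1 - (P - Q))⁻¹ = vecMulVec e π := by
    calc Q * (1 - (P - Q))⁻¹
        = (vecMulVec e π * (1 - (P - Q))) * (1 - (P - Q))⁻¹ := by rw [heπ]
      _ = vecMulVec e π * ((1 - (P - Q)) * (1 - (P - Q))⁻¹) := by rw [mul_assoc]
      _ = vecMulVec e π := by rw [Matrix.mul_nonsing_inv _ hdet, mul_one]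
  rw [sub_mul, one_mul, hQB]
  abel
end

section
/- Let B be the generator matrix of an ergodic finite continuous-time Markov process and r a row vector with r·e ≠ 0. Then the matrix B + e·r is invertible. -/
open Matrix

lemma aux_stoch_bound {S : ℕ} (M : Matrix (Fin S) (Fin S) ℝ)
    (hM : ∀ i j, 0 ≤ M i j) (hMe : M *ᵥ (fun _ => (1:ℝ)) = fun _ => 1)
    (v : Fin S → ℝ) (C : ℝ) (hC : ∀ j, |v j| ≤ C) : ∀ i, |(M *ᵥ v) i| ≤ C := by
  intro i
  have hrow : ∑ j, M i j = 1 := by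
    have := congrFun hMe i
    simpa [mulVec, dotProduct] using this
  calc |(M *ᵥ v) i| = |∑ j, M i j * v j| := by simp [mulVec, dotProduct]
    _ ≤ ∑ j, |M i j * v j| := Finset.abs_sum_le_sum_abs _ _
    _ ≤ ∑ j, M i j * C := by
        refine Finset.sum_le_sum fun j _ => ?_
        rw [abs_mul, abs_of_nonneg (hM i j)]
        exact mul_le_mul_of_nonneg_left (hC j) (hM i j)
    _ = C := by rw [← Finset.sum_mul, hrow, one_mul]

/-- For the generator `B` of an ergodic finite continuous-time Markov process
and a row vector `r` with `r·e ≠ 0`, the matrix `B + e·r` is invertible. -/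
theorem generator_rank_one_update_invertible
    {S : ℕ} (hS : 0 < S) (B : Matrix (Fin S) (Fin S) ℝ)
    (hoff : ∀ i j, i ≠ j → 0 ≤ B i j)
    (e : Fin S → ℝ) (he : e = fun _ => 1)
    (hBe : B *ᵥ e = 0)
    (γ : ℝ) (hγpos : 0 < γ) (hγ : ∀ s, |B s s| ≤ γ)
    (hprim : ∃ k : ℕ, ∀ i j, 0 < ((1 + γ⁻¹ • B) ^ k) i j)
    (r : Fin S → ℝ) (hre : r ⬝ᵥ e ≠ 0) :
    IsUnit (B + vecMulVec e r) := by
  have hγinv : (0:ℝ) < γ⁻¹ := inv_pos.2 hγpos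
  set P : Matrix (Fin S) (Fin S) ℝ := 1 + γ⁻¹ • B with hP
  -- entries of P are nonneg
  have hPnn : ∀ i j, 0 ≤ P i j := by
    intro i j
    by_cases hij : i = j
    · subst hij
      have h1 : -γ ≤ B i i := (abs_le.1 (hγ i)).1
      have : γ⁻¹ * B i i ≥ γ⁻¹ * (-γ) := mul_le_mul_of_nonneg_left h1 hγinv.le
      have hγγ : γ⁻¹ * (-γ) = -1 := by field_simp
      simp only [hP, Matrix.add_apply, Matrix.one_apply_eq, Matrix.smul_apply, smul_eq_mul]
      linarith [hγγ ▸ this]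
    · have := hoff i j hij
      simp only [hP, Matrix.add_apply, Matrix.one_apply_ne hij, Matrix.smul_apply, smul_eq_mul]
      positivity
  -- row sums of P
  have hPe : P *ᵥ e = e := by
    simp [hP, add_mulVec, smul_mulVec, hBe]
  -- apply the determinant criterion
  rw [Matrix.isUnit_iff_isUnit_det, isUnit_iff_ne_zero]
  intro hdet
  obtain ⟨v, hv0, hv⟩ := Matrix.exists_mulVec_eq_zero_iff.2 hdet
  -- rewrite the kernel relation
  have hvm : vecMulVec e r *ᵥ v = (r ⬝ᵥ v) • e := by
    ext i
    simp only [vecMulVec_apply, mulVec, dotProduct, Pi.smul_apply, smul_eq_mul]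
    rw [Finset.sum_mul]
    exact Finset.sum_congr rfl fun j _ => by ring
  set c : ℝ := -(r ⬝ᵥ v) with hc
  have hBv : B *ᵥ v = c • e := by
    have := hv
    rw [add_mulVec, hvm] at this
    have h2 : B *ᵥ v = -((r ⬝ᵥ v) • e) := by
      rw [eq_neg_iff_add_eq_zero]; exact this
    rw [h2, hc, neg_smul]
  have hPv : P *ᵥ v = v + (γ⁻¹ * c) • e := by
    rw [hP, add_mulVec, one_mulVec, smul_mulVec, hBv, smul_smul]
  -- powers
  have hPne : ∀ n, (P ^ n) *ᵥ e = e := by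
    intro n
    induction n with
    | zero => simp
    | succ n ih => rw [pow_succ', ← mulVec_mulVec, ih, hPe]
  have hPnv : ∀ n : ℕ, (P ^ n) *ᵥ v = v + ((n : ℝ) * (γ⁻¹ * c)) • e := by
    intro n
    induction n with
    | zero => simp
    | succ n ih =>
      rw [pow_succ', ← mulVec_mulVec, ih, mulVec_add, hPv, mulVec_smul, hPe]
      push_cast
      rw [add_mul, one_mul, add_smul]
      abel
  -- bound on powers applied to v
  set C : ℝ := ∑ j, |v j| with hCdef
  have hCb : ∀ j, |v j| ≤ C := fun j =>
    Finset.single_le_sum (fun k _ => abs_nonneg (v k)) (Finset.mem_univ j)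
  have hbound : ∀ n : ℕ, ∀ i, |((P ^ n) *ᵥ v) i| ≤ C := by
    intro n
    induction n with
    | zero => simpa using hCb
    | succ n ih =>
      intro i
      have := aux_stoch_bound P hPnn (he ▸ hPe) ((P ^ n) *ᵥ v) C ih i
      rwa [mulVec_mulVec, ← pow_succ'] at this
  -- conclude c = 0
  have hc0 : c = 0 := by
    by_contra hcne
    set c' : ℝ := γ⁻¹ * c with hc'
    have hc'ne : c' ≠ 0 := mul_ne_zero (ne_of_gt hγinv) hcne
    obtain ⟨n, hn⟩ := exists_nat_gt ((C + |v ⟨0, hS⟩|) / |c'|)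
    have hpos : 0 < |c'| := abs_pos.2 hc'ne
    have hn' : C + |v ⟨0, hS⟩| < (n : ℝ) * |c'| := by
      rwa [div_lt_iff₀ hpos] at hn
    have h1 : |((P ^ n) *ᵥ v) ⟨0, hS⟩| ≤ C := hbound n _
    have h2 : ((P ^ n) *ᵥ v) ⟨0, hS⟩ = v ⟨0, hS⟩ + (n : ℝ) * c' := by
      rw [hPnv n]; simp [he]
    rw [h2] at h1
    have habs : |(n : ℝ) * c'| = (n : ℝ) * |c'| := by
      rw [abs_mul, Nat.abs_cast]
    have key : |(n : ℝ) * c'| ≤ |v ⟨0, hS⟩ + (n : ℝ) * c'| + |v ⟨0, hS⟩| := by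
      have h3 := abs_add_le (v ⟨0, hS⟩ + (n : ℝ) * c') (-(v ⟨0, hS⟩))
      rw [abs_neg] at h3
      have h4 : v ⟨0, hS⟩ + (n : ℝ) * c' + -(v ⟨0, hS⟩) = (n : ℝ) * c' := by ring
      rwa [h4] at h3
    rw [habs] at key
    linarith
  -- now B v = 0, so P^k v = v with positive P^k: v is constant
  obtain ⟨k, hk⟩ := hprim
  have hAv : (P ^ k) *ᵥ v = v := by
    rw [hPnv k, hc0]; simp
  have hArow : ∀ i, ∑ j, (P ^ k) i j = 1 := by
    intro i
    have := congrFun (hPne k) i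
    simpa [mulVec, dotProduct, he] using this
  obtain ⟨i0, _, hi0⟩ := Finset.exists_max_image Finset.univ v ⟨⟨0, hS⟩, Finset.mem_univ _⟩
  have hsum0 : ∑ j, (P ^ k) i0 j * (v i0 - v j) = 0 := by
    have h1 : ∑ j, (P ^ k) i0 j * v j = v i0 := by
      have := congrFun hAv i0
      simpa [mulVec, dotProduct] using this
    have h2 : ∑ j, (P ^ k) i0 j * v i0 = v i0 := by
      rw [← Finset.sum_mul, hArow, one_mul]
    simp only [mul_sub, Finset.sum_sub_distrib, h1, h2, sub_self]
  have hconst : ∀ j, v j = v i0 := by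
    intro j
    have hterm := (Finset.sum_eq_zero_iff_of_nonneg
      (fun j _ => mul_nonneg (hk i0 j).le
        (sub_nonneg.2 (hi0 j (Finset.mem_univ j))))).1 hsum0 j (Finset.mem_univ j)
    have := mul_eq_zero.1 hterm
    rcases this with h | h
    · exact absurd h (ne_of_gt (hk i0 j))
    · linarith [sub_eq_zero.1 h]
  -- v constant and r ⬝ᵥ v = 0 force v = 0
  have hrv : r ⬝ᵥ v = 0 := by
    have : c = -(r ⬝ᵥ v) := hc
    rw [hc0] at this; linarith
  have hrvval : r ⬝ᵥ v = v i0 * (r ⬝ᵥ e) := by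
    simp only [dotProduct, he]
    rw [Finset.mul_sum]
    exact Finset.sum_congr rfl fun j _ => by rw [hconst j]; ring
  have hvi0 : v i0 = 0 := by
    rw [hrvval] at hrv
    rcases mul_eq_zero.1 hrv with h | h
    · exact h
    · exact absurd h hre
  exact hv0 (funext fun j => by rw [hconst j, hvi0]; rfl)
end

section
/- Let B be the generator of an ergodic finite continuous-time Markov process with stationary distribution π (π B = 0, π e = 1), and let r be a row vector with r·e ≠ 0. Then π = r (B + e·r)^{-1}. -/
open Matrix

lemma eig_const {S : ℕ} (hS : 0 < S) (M : Matrix (Fin S) (Fin S) ℝ)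
    (hpos : ∀ i j, 0 < M i j) (hMe : M *ᵥ (fun _ => (1:ℝ)) = fun _ => 1)
    (v : Fin S → ℝ) (hv : M *ᵥ v = v) : ∀ i j, v i = v j := by
  obtain ⟨j, -, hj⟩ := Finset.exists_max_image Finset.univ v
    ⟨⟨0, hS⟩, Finset.mem_univ _⟩
  suffices h : ∀ i, v i = v j by intro i i'; rw [h i, h i']
  have hrow1 : ∑ i, M j i = 1 := by
    have := congrFun hMe j
    simpa [mulVec, dotProduct] using this
  have hrowv : ∑ i, M j i * v i = v j := congrFun hv j
  have hzero : ∑ i, M j i * (v j - v i) = 0 := by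
    have : ∑ i, M j i * (v j - v i) = (∑ i, M j i) * v j - ∑ i, M j i * v i := by
      simp only [mul_sub, Finset.sum_sub_distrib, Finset.sum_mul]
    rw [this, hrow1, hrowv]; ring
  intro i
  have hterm : M j i * (v j - v i) = 0 := by
    have := (Finset.sum_eq_zero_iff_of_nonneg (fun i _ =>
      mul_nonneg (hpos j i).le (sub_nonneg.mpr (hj i (Finset.mem_univ i))))).mp hzero
    exact this i (Finset.mem_univ i)
  have := (mul_eq_zero.mp hterm).resolve_left (hpos j i).ne'
  linarith

/-- For the generator `B` of an ergodic finite continuous-time Markov process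
with stationary distribution `π` and a row vector `r` with `r·e ≠ 0`, we have
`π = r (B + e·r)⁻¹`. -/
theorem ctmc_stationary_distribution_formula
    {S : ℕ} (hS : 0 < S) (B : Matrix (Fin S) (Fin S) ℝ)
    (hoff : ∀ i j, i ≠ j → 0 ≤ B i j)
    (e : Fin S → ℝ) (he : e = fun _ => 1)
    (hBe : B *ᵥ e = 0)
    (γ : ℝ) (hγpos : 0 < γ) (hγ : ∀ s, |B s s| ≤ γ)
    (hprim : ∃ k : ℕ, ∀ i j, 0 < ((1 + γ⁻¹ • B) ^ k) i j)
    (π : Fin S → ℝ) (hπB : π ᵥ* B = 0) (hπe : π ⬝ᵥ e = 1)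
    (r : Fin S → ℝ) (hre : r ⬝ᵥ e ≠ 0) :
    π = r ᵥ* (B + vecMulVec e r)⁻¹ := by
  obtain ⟨k, hk⟩ := hprim
  set A : Matrix (Fin S) (Fin S) ℝ := 1 + γ⁻¹ • B with hA
  set M : Matrix (Fin S) (Fin S) ℝ := B + vecMulVec e r with hM
  -- π ᵥ* M = r
  have hπM : π ᵥ* M = r := by
    ext j
    have : ∑ i, π i * (e i * r j) = (∑ i, π i * e i) * r j := by
      rw [Finset.sum_mul]; apply Finset.sum_congr rfl; intros; ring
    simp only [hM, vecMul, dotProduct, Matrix.add_apply, vecMulVec_apply, mul_add,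
      Finset.sum_add_distrib, this]
    have h1 : ∑ i, π i * B i j = 0 := congrFun hπB j
    have h2 : ∑ i, π i * e i = 1 := hπe
    rw [h1, h2]; ring
  -- M has nonzero determinant
  have hdet : M.det ≠ 0 := by
    intro hd
    obtain ⟨v, hv0, hMv⟩ := (Matrix.exists_mulVec_eq_zero_iff).mpr hd
    have hsplit : B *ᵥ v + (r ⬝ᵥ v) • e = 0 := by
      have : vecMulVec e r *ᵥ v = (r ⬝ᵥ v) • e := by
        ext i
        simp only [mulVec, dotProduct, vecMulVec_apply, Pi.smul_apply, smul_eq_mul]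
        rw [Finset.sum_mul]; apply Finset.sum_congr rfl; intros; ring
      rw [← this, ← Matrix.add_mulVec, ← hM, hMv]
    have hrv : r ⬝ᵥ v = 0 := by
      have hdot := congrArg (fun w => π ⬝ᵥ w) hsplit
      simp only [dotProduct_add, dotProduct_smul, dotProduct_zero, smul_eq_mul] at hdot
      have h1 : π ⬝ᵥ (B *ᵥ v) = 0 := by
        rw [Matrix.dotProduct_mulVec, hπB, zero_dotProduct]
      rw [h1, hπe, zero_add, mul_one] at hdot
      exact hdot
    have hBv : B *ᵥ v = 0 := by
      rw [hrv, zero_smul, add_zero] at hsplit; exact hsplit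
    have hAv : A *ᵥ v = v := by
      rw [hA, Matrix.add_mulVec, Matrix.one_mulVec, Matrix.smul_mulVec, hBv,
        smul_zero, add_zero]
    have hAkv : ∀ n, A ^ n *ᵥ v = v := by
      intro n
      induction n with
      | zero => simp
      | succ n ih => rw [pow_succ, ← Matrix.mulVec_mulVec, hAv, ih]
    have hAe : A *ᵥ (fun _ => (1:ℝ)) = fun _ => 1 := by
      have : A *ᵥ e = e := by
        rw [hA, Matrix.add_mulVec, Matrix.one_mulVec, Matrix.smul_mulVec, hBe,
          smul_zero, add_zero]
      rwa [he] at this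
    have hAke : ∀ n, A ^ n *ᵥ (fun _ => (1:ℝ)) = fun _ => 1 := by
      intro n
      induction n with
      | zero => simp
      | succ n ih => rw [pow_succ, ← Matrix.mulVec_mulVec, hAe, ih]
    have hconst := eig_const hS (A ^ k) hk (hAke k) v (hAkv k)
    set i0 : Fin S := ⟨0, hS⟩
    have hv00 : v i0 = 0 := by
      have : r ⬝ᵥ v = (r ⬝ᵥ e) * v i0 := by
        simp only [dotProduct, he, mul_one, Finset.sum_mul]
        exact Finset.sum_congr rfl fun i _ => by rw [hconst i i0]
      rw [hrv] at this
      exact (mul_eq_zero.mp this.symm).resolve_left hre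
    exact hv0 (funext fun i => by rw [hconst i i0, hv00]; simp)
  have hunit : IsUnit M.det := isUnit_iff_ne_zero.mpr hdet
  calc π = (π ᵥ* M) ᵥ* M⁻¹ := by
        rw [Matrix.vecMul_vecMul, Matrix.mul_nonsing_inv M hunit, Matrix.vecMul_one]
    _ = r ᵥ* M⁻¹ := by rw [hπM]
end
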